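/- Let M ∈ M_n(ℝ) and suppose there is a continuous function h : ℝⁿ → ℝ such that for every vector v and every positive integer k, h(M^k v) ≥ h(Mv) ≥ h(v), and h(Mv) = h(v) implies Mv = v. Then M has no complex eigenvalue μ with |μ| = 1 and μ ≠ 1. -/

import Mathlib

open Matrix Filter Topology

theorem stmt5 {n : ℕ} (M : Matrix (Fin n) (Fin n) ℝ) (h : (Fin n → ℝ) → ℝ)
    (hc : Continuous h)
    (hmono : ∀ (v : Fin n → ℝ) (k : ℕ), 0 < k →
      h ((M ^ k) *ᵥ v) ≥ h (M *ᵥ v) ∧ h (M *ᵥ v) ≥ h v)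
    (heq : ∀ v : Fin n → ℝ, h (M *ᵥ v) = h v → M *ᵥ v = v) :
    ¬ ∃ μ : ℂ, ‖μ‖ = 1 ∧ μ ≠ 1 ∧
      ∃ w : Fin n → ℂ, w ≠ 0 ∧ (M.map Complex.ofReal) *ᵥ w = μ • w := by
  rintro ⟨μ, habs, hμ1, w, hw, hew⟩
  have hμ0 : μ ≠ 0 := by
    intro h0; rw [h0] at habs; simp at habs
  -- powers of mapped matrix
  have hmap : ∀ k : ℕ, (M ^ k).map Complex.ofReal = (M.map Complex.ofReal) ^ k := by
    intro k
    have := map_pow ((Complex.ofRealHom : ℝ →+* ℂ).mapMatrix) M k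
    exact this
  have hpow : ∀ k : ℕ, (M.map Complex.ofReal) ^ k *ᵥ w = μ ^ k • w := by
    intro k
    induction k with
    | zero => simp
    | succ k ih =>
      rw [pow_succ', ← mulVec_mulVec, ih, mulVec_smul, hew, smul_smul, ← pow_succ]
  -- entrywise formulas
  have keyre : ∀ (k : ℕ) (i : Fin n),
      (M ^ k *ᵥ fun j => (w j).re) i = (μ ^ k * w i).re := by
    intro k i
    have h1 : μ ^ k * w i = ((M ^ k).map Complex.ofReal *ᵥ w) i := by
      rw [hmap, hpow]; simp
    rw [h1]
    simp [mulVec, dotProduct, Complex.re_sum, Complex.re_ofReal_mul]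
  have keyim : ∀ (k : ℕ) (i : Fin n),
      (M ^ k *ᵥ fun j => (w j).im) i = (μ ^ k * w i).im := by
    intro k i
    have h1 : μ ^ k * w i = ((M ^ k).map Complex.ofReal *ᵥ w) i := by
      rw [hmap, hpow]; simp
    rw [h1]
    simp [mulVec, dotProduct, Complex.im_sum, Complex.im_ofReal_mul]
  -- find exponents kj ≥ 1 with μ^{kj} → 1
  have hmem : ∀ k : ℕ, μ ^ k ∈ Metric.sphere (0 : ℂ) 1 := by
    intro k
    simp [Complex.dist_eq, map_pow, habs]
  obtain ⟨z, hz, φ, hφ, hlim⟩ :=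
    (isCompact_sphere (0 : ℂ) 1).tendsto_subseq hmem
  have hz0 : z ≠ 0 := by
    intro h0; rw [h0] at hz; simp at hz
  set k : ℕ → ℕ := fun j => φ (j + 1) - φ j with hk
  have hk1 : ∀ j, 0 < k j := fun j => Nat.sub_pos_of_lt (hφ (Nat.lt_succ_self j))
  have hklim : Tendsto (fun j => μ ^ k j) atTop (𝓝 1) := by
    have h1 : Tendsto (fun j => μ ^ φ (j + 1)) atTop (𝓝 z) :=
      hlim.comp (tendsto_add_atTop_nat 1)
    have h2 : Tendsto (fun j => μ ^ φ (j + 1) / μ ^ φ j) atTop (𝓝 (z / z)) :=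
      h1.div hlim hz0
    rw [div_self hz0] at h2
    refine h2.congr fun j => ?_
    rw [hk, pow_sub₀ μ hμ0 (hφ (Nat.lt_succ_self j)).le, div_eq_mul_inv]
  -- main fixed point argument
  have main : ∀ (f : ℂ → Fin n → ℝ),
      Continuous f → (∀ j, M ^ k j *ᵥ f 1 = f (μ ^ k j)) → M *ᵥ f 1 = f 1 := by
    intro f hf hfe
    have hlim2 : Tendsto (fun j => M ^ k j *ᵥ f 1) atTop (𝓝 (f 1)) := by
      simp only [hfe]
      exact (hf.tendsto 1).comp hklim
    have hle : h (M *ᵥ f 1) ≤ h (f 1) := by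
      have hT := (hc.tendsto (f 1)).comp hlim2
      refine ge_of_tendsto hT (Eventually.of_forall fun j => ?_)
      exact (hmono (f 1) (k j) (hk1 j)).1
    exact heq _ (le_antisymm hle (hmono (f 1) 1 one_pos).2)
  have hre : M *ᵥ (fun i => (w i).re) = fun i => (w i).re := by
    have := main (fun z i => (z * w i).re)
      (continuous_pi fun i => Complex.continuous_re.comp (continuous_id.mul continuous_const)) (fun j => by
      funext i; simpa using keyre (k j) i)
    simpa using this
  have him : M *ᵥ (fun i => (w i).im) = fun i => (w i).im := by
    have := main (fun z i => (z * w i).im)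
      (continuous_pi fun i => Complex.continuous_im.comp (continuous_id.mul continuous_const)) (fun j => by
      funext i; simpa using keyim (k j) i)
    simpa using this
  have hMw : M.map Complex.ofReal *ᵥ w = w := by
    funext i
    have h1 : (M.map Complex.ofReal *ᵥ w) i = (M *ᵥ fun j => (w j).re) i + (M *ᵥ fun j => (w j).im) i * Complex.I := by
      simp [mulVec, dotProduct, Complex.ext_iff, Complex.re_sum, Complex.im_sum,
        Complex.re_ofReal_mul, Complex.im_ofReal_mul]
    rw [h1, hre, him]
    set_option linter.unnecessarySimpa false in simpa using (Complex.re_add_im (w i)).symm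
  rw [hew] at hMw
  obtain ⟨i, hi⟩ := Function.ne_iff.mp hw
  have : (μ - 1) * w i = 0 := by
    have := congrFun hMw i
    simp only [Pi.smul_apply, smul_eq_mul] at this
    ring_nf
    linear_combination this
  rcases mul_eq_zero.mp this with h1 | h1
  · exact hμ1 (sub_eq_zero.mp h1)
  · exact hi h1
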